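/- Let r be the generating function of the large Schröder numbers, satisfying r = 1 + z·r + z·r². Then the Riordan array (r, z·r²) is a pseudo-involution, i.e., z·r² is pseudo-involutory and r ∘ (-z·r²) = 1/r. -/

import Mathlib

open PowerSeries

/-- Composition `f ∘ g` of formal power series (meaningful when the constant
coefficient of `g` is zero). -/
noncomputable def comp (f g : PowerSeries ℚ) : PowerSeries ℚ :=
  PowerSeries.mk fun n =>
    ∑ i ∈ Finset.range (n + 1), (PowerSeries.coeff i f) * (PowerSeries.coeff n (g ^ i))

/-- A formal power series `f` is pseudo-involutory when its compositional
inverse is `-f(-z)`. -/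
def PseudoInvolutory (f : PowerSeries ℚ) : Prop :=
  comp f (-(comp f (-X))) = X ∧ comp (-(comp f (-X))) f = X

lemma coeff_comp (f g : PowerSeries ℚ) (n : ℕ) :
    coeff n (comp f g) = ∑ i ∈ Finset.range (n + 1), coeff i f * coeff n (g ^ i) := by
  simp [comp]

lemma coeff_pow_zero_of_lt {g : PowerSeries ℚ} (hg : constantCoeff g = 0)
    {n i : ℕ} (h : n < i) : coeff n (g ^ i) = 0 :=
  X_pow_dvd_iff.mp (pow_dvd_pow_of_dvd (X_dvd_iff.mpr hg) i) n h

lemma coeff_comp_big {g : PowerSeries ℚ} (hg : constantCoeff g = 0) (f : PowerSeries ℚ)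
    {n N : ℕ} (hn : n < N) :
    coeff n (comp f g) = ∑ i ∈ Finset.range N, coeff i f * coeff n (g ^ i) := by
  rw [coeff_comp]
  refine Finset.sum_subset (Finset.range_subset_range.mpr hn) ?_
  intro i _ hi
  rw [Finset.mem_range, not_lt] at hi
  rw [coeff_pow_zero_of_lt hg (lt_of_lt_of_le (Nat.lt_of_succ_le (le_refl _)) hi |>.trans_le (le_refl _) |> (fun _ => Nat.lt_of_succ_le hi)) , mul_zero]

lemma coeff_comp_eval {g : PowerSeries ℚ} (hg : constantCoeff g = 0) (f : PowerSeries ℚ)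
    {n N : ℕ} (hn : n < N) :
    coeff n (comp f g) = coeff n ((trunc N f).eval₂ C g) := by
  rw [eval₂_trunc_eq_sum_range, map_sum, coeff_comp_big hg f hn]
  simp [coeff_C_mul]

lemma coeff_eval_poly {g : PowerSeries ℚ} (hg : constantCoeff g = 0) (P : Polynomial ℚ)
    {n N : ℕ} (hn : n < N) (hd : P.natDegree < N) :
    coeff n (P.eval₂ C g) = ∑ i ∈ Finset.range N, P.coeff i * coeff n (g ^ i) := by
  rw [Polynomial.eval₂_eq_sum_range' _ hd, map_sum]
  simp [coeff_C_mul]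

lemma coeff_eval_trunc_coe {g : PowerSeries ℚ} (hg : constantCoeff g = 0) (P : Polynomial ℚ)
    {n N : ℕ} (hn : n < N) :
    coeff n ((trunc N (P : PowerSeries ℚ)).eval₂ C g) = coeff n (P.eval₂ C g) := by
  set M := max N (P.natDegree + 1) with hM
  have hnM : n < M := lt_of_lt_of_le hn (le_max_left _ _)
  have hdM : P.natDegree < M := lt_of_lt_of_le (Nat.lt_succ_self _) (le_max_right _ _)
  rw [coeff_eval_poly hg P hnM hdM, eval₂_trunc_eq_sum_range, map_sum]
  simp only [coeff_C_mul]
  rw [← Finset.sum_subset (Finset.range_subset_range.mpr (le_max_left N (P.natDegree+1)))]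
  · refine Finset.sum_congr rfl ?_
    intro i hi
    rw [Finset.mem_range] at hi
    rw [Polynomial.coeff_coe]
  · intro i _ hi
    rw [Finset.mem_range, not_lt] at hi
    rw [coeff_pow_zero_of_lt hg (lt_of_lt_of_le hn hi), mul_zero]

lemma comp_mul {g : PowerSeries ℚ} (hg : constantCoeff g = 0) (f₁ f₂ : PowerSeries ℚ) :
    comp (f₁ * f₂) g = comp f₁ g * comp f₂ g := by
  ext n
  rw [coeff_comp_eval hg (f₁ * f₂) (Nat.lt_succ_self n), ← trunc_trunc_mul_trunc,
    ← Polynomial.coe_mul, coeff_eval_trunc_coe hg _ (Nat.lt_succ_self n),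
    Polynomial.eval₂_mul, PowerSeries.coeff_mul, PowerSeries.coeff_mul]
  refine Finset.sum_congr rfl ?_
  intro p hp
  rw [coeff_comp_eval hg f₁ (Finset.Nat.antidiagonal.fst_lt hp),
    coeff_comp_eval hg f₂ (Finset.Nat.antidiagonal.snd_lt hp)]

lemma comp_add (f₁ f₂ g : PowerSeries ℚ) :
    comp (f₁ + f₂) g = comp f₁ g + comp f₂ g := by
  ext n
  simp [comp, add_mul, Finset.sum_add_distrib]

lemma comp_neg (f g : PowerSeries ℚ) : comp (-f) g = -(comp f g) := by
  ext n
  simp [comp, Finset.sum_neg_distrib]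

lemma comp_one (g : PowerSeries ℚ) : comp 1 g = 1 := by
  ext n
  simp [comp, coeff_one, ite_mul]

lemma comp_X {g : PowerSeries ℚ} (hg : constantCoeff g = 0) : comp X g = g := by
  ext n
  cases n with
  | zero =>
    simp [comp, coeff_X]
    exact hg.symm
  | succ m =>
    simp [comp, coeff_X, ite_mul, Finset.mem_range]

lemma comp_pow {g : PowerSeries ℚ} (hg : constantCoeff g = 0) (f : PowerSeries ℚ) (k : ℕ) :
    comp (f ^ k) g = (comp f g) ^ k := by
  induction k with
  | zero => simpa using comp_one g
  | succ m ih => rw [pow_succ, comp_mul hg, ih, pow_succ]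

lemma constantCoeff_comp (f g : PowerSeries ℚ) :
    constantCoeff (comp f g) = constantCoeff f := by
  rw [← coeff_zero_eq_constantCoeff_apply, ← coeff_zero_eq_constantCoeff_apply]
  simp [comp]

/-- Uniqueness of power series solutions of `y = 1 + a y + a y²` when `a(0) = 0`. -/
lemma uniq_sol {a y₁ y₂ : PowerSeries ℚ} (ha : constantCoeff a = 0)
    (h₁ : y₁ = 1 + a * y₁ + a * y₁ ^ 2) (h₂ : y₂ = 1 + a * y₂ + a * y₂ ^ 2) :
    y₁ = y₂ := by
  have key : (y₁ - y₂) * (1 - a - a * (y₁ + y₂)) = 0 := by linear_combination h₁ - h₂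
  rcases mul_eq_zero.mp key with h | h
  · exact sub_eq_zero.mp h
  · exfalso
    have := congrArg (constantCoeff) h
    simp [ha] at this

/-- For the large Schröder generating function `r = 1 + z·r + z·r²`, the
Riordan array `(r, z·r²)` is a pseudo-involution: `z·r²` is
pseudo-involutory and `r ∘ (-z·r²) = 1/r`. -/
theorem schroeder_pseudo_involution (r : PowerSeries ℚ)
    (hr : r = 1 + X * r + X * r ^ 2) :
    PseudoInvolutory (X * r ^ 2) ∧ comp r (-(X * r ^ 2)) = r⁻¹ := by
  have hc0 : constantCoeff r = 1 := by
    have := congrArg (constantCoeff) hr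
    simpa using this
  have hcne : constantCoeff r ≠ 0 := by rw [hc0]; exact one_ne_zero
  have hr0 : r ≠ 0 := fun h => hcne (by rw [h]; simp)
  have hrinv : r * r⁻¹ = 1 := PowerSeries.mul_inv_cancel r hcne
  have hrinv_eq : r⁻¹ = 1 - X - X * r := by
    have h1 : r * (1 - X - X * r) = 1 := by linear_combination hr
    exact mul_left_cancel₀ hr0 (hrinv.trans h1.symm)
  have ha : constantCoeff (-(X * r ^ 2)) = 0 := by simp
  set a := -(X * r ^ 2) with ha_def
  have hEinv : r⁻¹ = 1 + a * r⁻¹ + a * (r⁻¹) ^ 2 := by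
    rw [ha_def]
    rw [hrinv_eq]
    linear_combination (X + 2 * X * r - X ^ 2 * r - X ^ 2 * r ^ 2) * hr
  -- Part 2 : comp r (-(X r²)) = r⁻¹
  have hw : comp r a = 1 + a * comp r a + a * (comp r a) ^ 2 := by
    conv_lhs => rw [hr]
    rw [comp_add, comp_add, comp_one, comp_mul ha, comp_mul ha, comp_X ha, comp_pow ha]
  have part2 : comp r a = r⁻¹ := uniq_sol ha hw hEinv
  -- s := r(-z)
  set s := comp r (-X) with hs_def
  have hXneg : constantCoeff (-X : PowerSeries ℚ) = 0 := by simp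
  have hs : s = 1 + (-X) * s + (-X) * s ^ 2 := by
    conv_lhs => rw [hs_def, hr]
    rw [comp_add, comp_add, comp_one, comp_mul hXneg, comp_mul hXneg, comp_X hXneg,
      comp_pow hXneg]
  have hs0 : constantCoeff s = 1 := by rw [hs_def, constantCoeff_comp, hc0]
  have hsne : constantCoeff s ≠ 0 := by rw [hs0]; exact one_ne_zero
  have hs_ne0 : s ≠ 0 := fun h => hsne (by rw [h]; simp)
  have hsinv : s * s⁻¹ = 1 := PowerSeries.mul_inv_cancel s hsne
  have hsinv_eq : s⁻¹ = 1 + X + X * s := by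
    have h1 : s * (1 + X + X * s) = 1 := by linear_combination hs
    exact mul_left_cancel₀ hs_ne0 (hsinv.trans h1.symm)
  have hb : constantCoeff (X * s ^ 2) = 0 := by simp
  have hEsinv : s⁻¹ = 1 + (X * s ^ 2) * s⁻¹ + (X * s ^ 2) * (s⁻¹) ^ 2 := by
    rw [hsinv_eq]
    linear_combination (-X - 2 * X * s - X ^ 2 * s - X ^ 2 * s ^ 2) * hs
  have hv : comp r (X * s ^ 2)
      = 1 + (X * s ^ 2) * comp r (X * s ^ 2) + (X * s ^ 2) * (comp r (X * s ^ 2)) ^ 2 := by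
    conv_lhs => rw [hr]
    rw [comp_add, comp_add, comp_one, comp_mul hb, comp_mul hb, comp_X hb, comp_pow hb]
  have hveq : comp r (X * s ^ 2) = s⁻¹ := uniq_sol hb hv hEsinv
  have hbr : constantCoeff (X * r ^ 2) = 0 := by simp
  have hw' : comp s (X * r ^ 2)
      = 1 + a * comp s (X * r ^ 2) + a * (comp s (X * r ^ 2)) ^ 2 := by
    rw [ha_def]
    conv_lhs => rw [hs]
    rw [comp_add, comp_add, comp_one, comp_mul hbr, comp_mul hbr, comp_neg, comp_X hbr,
      comp_pow hbr]
  have hw'eq : comp s (X * r ^ 2) = r⁻¹ := uniq_sol ha hw' hEinv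
  have hnegcomp : comp (X * r ^ 2) (-X) = -(X * s ^ 2) := by
    rw [comp_mul hXneg, comp_X hXneg, comp_pow hXneg, ← hs_def]
    ring
  refine ⟨⟨?_, ?_⟩, part2⟩
  · rw [hnegcomp, neg_neg, comp_mul hb, comp_X hb, comp_pow hb, hveq]
    calc X * s ^ 2 * s⁻¹ ^ 2 = X * (s * s⁻¹) ^ 2 := by ring
    _ = X := by rw [hsinv]; ring
  · rw [hnegcomp, neg_neg, comp_mul hbr, comp_X hbr, comp_pow hbr, hw'eq]
    calc X * r ^ 2 * r⁻¹ ^ 2 = X * (r * r⁻¹) ^ 2 := by ring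
    _ = X := by rw [hrinv]; ring
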